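/- Let ζ ∈ ℂ be a primitive 9th root of unity and define Q : ℤ × ℤ → ℂ by Q(m,n) = (−1)^(m²) · ζ^(m² + 3n² + 7mn). Then for S = {(1,0), (2,1), (3,2), (1,1), (1,2), (0,1)}, every Q(α) with α ∈ S is a root of unity, and the product over α ∈ S of the multiplicative order of Q(α) equals 2⁴·3⁶ = 11664. -/

import Mathlib

theorem stmt_5 (ζ : ℂ) (hζ : IsPrimitiveRoot ζ 9)
    (Q : ℤ × ℤ → ℂ) (hQ : ∀ m n : ℤ, Q (m, n) = (-1 : ℂ) ^ (m^2) * ζ ^ (m^2 + 3*n^2 + 7*m*n))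
    (S : Finset (ℤ × ℤ)) (hS : S = {(1,0), (2,1), (3,2), (1,1), (1,2), (0,1)}) :
    (∀ α ∈ S, IsOfFinOrder (Q α)) ∧ ∏ α ∈ S, orderOf (Q α) = 2^4 * 3^6 := by
  have hz9 : ζ ^ (9:ℕ) = 1 := hζ.pow_eq_one
  have ho : orderOf ζ = 9 := hζ.eq_orderOf.symm
  have hzne : ζ ≠ 0 := hζ.ne_zero (by norm_num)
  -- values
  have zp : ∀ (a : ℕ), ζ ^ ((a:ℕ):ℤ) = ζ ^ a := fun a => zpow_natCast ζ a
  have v1 : Q (1, 0) = -ζ := by rw [hQ]; norm_num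
  have v2 : Q (2, 1) = ζ ^ (3:ℕ) := by
    rw [hQ]; norm_num
    rw [show (21:ℕ) = 9*2+3 from rfl, pow_add, pow_mul, hz9]
    norm_num
  have v3 : Q (3, 2) = -1 := by
    rw [hQ]; norm_num
    rw [show (63:ℕ) = 9*7 from rfl, pow_mul, hz9]
    norm_num
  have v4 : Q (1, 1) = -ζ ^ (2:ℕ) := by
    rw [hQ]; norm_num
    rw [show (11:ℕ) = 9+2 from rfl, pow_add, hz9]
    norm_num
  have v5 : Q (1, 2) = -1 := by
    rw [hQ]; norm_num
    rw [show (27:ℕ) = 9*3 from rfl, pow_mul, hz9]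
    norm_num
  have v6 : Q (0, 1) = ζ ^ (3:ℕ) := by
    rw [hQ]; norm_num
  -- orders
  have oneg : orderOf (-1 : ℂ) = 2 := by
    rw [orderOf_neg_one]; norm_num [ringChar.eq_zero]
  have o3 : orderOf (ζ ^ (3:ℕ)) = 3 := by
    rw [orderOf_pow' ζ (by norm_num : (3:ℕ) ≠ 0), ho]; decide
  have o2 : orderOf (ζ ^ (2:ℕ)) = 9 := by
    rw [orderOf_pow' ζ (by norm_num : (2:ℕ) ≠ 0), ho]; decide
  have oneg1 : orderOf (-ζ) = 18 := by
    have := Commute.orderOf_mul_eq_mul_orderOf_of_coprime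
      (x := (-1 : ℂ)) (y := ζ) (Commute.all _ _) (by rw [oneg, ho]; norm_num)
    rw [oneg, ho] at this
    simpa using this
  have oneg2 : orderOf (-ζ ^ (2:ℕ)) = 18 := by
    have := Commute.orderOf_mul_eq_mul_orderOf_of_coprime
      (x := (-1 : ℂ)) (y := ζ ^ (2:ℕ)) (Commute.all _ _) (by rw [oneg, o2]; norm_num)
    rw [oneg, o2] at this
    simpa using this
  constructor
  · intro α hα
    rw [hS] at hα
    fin_cases hα <;> rw [← orderOf_pos_iff] <;>
      simp only [v1, v2, v3, v4, v5, v6, oneg1, oneg2, oneg, o3] <;> norm_num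
  · rw [hS]
    rw [show ({(1,0), (2,1), (3,2), (1,1), (1,2), (0,1)} : Finset (ℤ × ℤ)).prod (fun α => orderOf (Q α)) = orderOf (Q (1,0)) * (orderOf (Q (2,1)) * (orderOf (Q (3,2)) * (orderOf (Q (1,1)) * (orderOf (Q (1,2)) * orderOf (Q (0,1)))))) from by
      repeat rw [Finset.prod_insert (by decide)]
      rw [Finset.prod_singleton]]
    rw [v1, v2, v3, v4, v5, v6, oneg1, oneg2, oneg, o3]; norm_num
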